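/- Let H be a self-adjoint operator on a nonzero finite-dimensional complex inner product space, E* ∈ ℝ and δ ≥ 0. (i) If ψ is a unit vector with ‖(H − E*)ψ‖ ≤ δ, then H has an eigenvalue E with |E − E*| ≤ δ. (ii) If ψ₁, ψ₂ are orthonormal vectors with ‖(H − E*)ψ₁‖ ≤ δ and ‖(H − E*)ψ₂‖ ≤ δ, then there exist orthonormal vectors φ₁, φ₂ and real numbers E₁, E₂ with Hφ_k = E_k φ_k and |E_k − E*| ≤ √2·δ for k = 1, 2. -/

import Mathlib

open scoped InnerProductSpace

/-- (i) a single unit trial vector with `‖(H − E*)ψ‖ ≤ δ` produces an eigenvalue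
within `δ` of `E*`; (ii) two orthonormal trial vectors produce two orthonormal eigenvectors
whose eigenvalues are within `√2·δ` of `E*`. -/
theorem statement14 {V : Type*} [NormedAddCommGroup V] [InnerProductSpace ℂ V]
    [FiniteDimensional ℂ V] [Nontrivial V]
    (H : V →ₗ[ℂ] V) (hH : LinearMap.IsSymmetric H)
    (Es δ : ℝ) (hδ : 0 ≤ δ) :
    (∀ ψ : V, ‖ψ‖ = 1 → ‖H ψ - (Es : ℂ) • ψ‖ ≤ δ →
      ∃ (E : ℝ) (φ : V), ‖φ‖ = 1 ∧ H φ = (E : ℂ) • φ ∧ |E - Es| ≤ δ) ∧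
    (∀ ψ₁ ψ₂ : V, Orthonormal ℂ ![ψ₁, ψ₂] →
      ‖H ψ₁ - (Es : ℂ) • ψ₁‖ ≤ δ → ‖H ψ₂ - (Es : ℂ) • ψ₂‖ ≤ δ →
      ∃ (E₁ E₂ : ℝ) (φ₁ φ₂ : V), Orthonormal ℂ ![φ₁, φ₂] ∧
        H φ₁ = (E₁ : ℂ) • φ₁ ∧ H φ₂ = (E₂ : ℂ) • φ₂ ∧
        |E₁ - Es| ≤ Real.sqrt 2 * δ ∧ |E₂ - Es| ≤ Real.sqrt 2 * δ) := by
  have hn : Module.finrank ℂ V = Module.finrank ℂ V := rfl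
  set b := hH.eigenvectorBasis hn with hb
  set μ := hH.eigenvalues hn with hμ
  have hnormsq : ∀ v : V, ‖v‖ ^ 2 = ∑ i, ‖b.repr v i‖ ^ 2 := by
    intro v
    rw [← b.repr.norm_map v, EuclideanSpace.norm_eq, Real.sq_sqrt (by positivity)]
  have hrepr : ∀ (ψ : V) (i : Fin (Module.finrank ℂ V)),
      b.repr (H ψ - (Es : ℂ) • ψ) i = ((μ i - Es : ℝ) : ℂ) * b.repr ψ i := by
    intro ψ i
    rw [map_sub, map_smul]
    have h1 := hH.eigenvectorBasis_apply_self_apply hn ψ i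
    have hco : ∀ r : ℝ, (RCLike.ofReal r : ℂ) = Complex.ofReal r := fun _ => rfl
    simp only [PiLp.sub_apply, PiLp.smul_apply, smul_eq_mul, hb, h1, hμ, hco]
    push_cast
    ring
  have hkey : ∀ ψ : V, ‖H ψ - (Es : ℂ) • ψ‖ ^ 2
      = ∑ i, (μ i - Es) ^ 2 * ‖b.repr ψ i‖ ^ 2 := by
    intro ψ
    rw [hnormsq]
    refine Finset.sum_congr rfl fun i _ => ?_
    rw [hrepr ψ i, norm_mul, mul_pow, Complex.norm_real, Real.norm_eq_abs, sq_abs]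
  -- general bound: the squared-coefficient mass on eigenvalues within `t` of `Es`
  -- exceeds 1/2 whenever `2δ² ≤ t²`
  have main : ∀ (t : ℝ), 0 ≤ t → 2 * δ ^ 2 ≤ t ^ 2 →
      ∀ ψ : V, ‖ψ‖ = 1 → ‖H ψ - (Es : ℂ) • ψ‖ ≤ δ →
      (1 : ℝ) / 2 < ∑ i ∈ Finset.univ.filter (fun i => |μ i - Es| ≤ t),
        ‖b.repr ψ i‖ ^ 2 := by
    intro t ht h2t ψ hψ hle
    set S := Finset.univ.filter (fun i => |μ i - Es| ≤ t) with hS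
    have hsum1 : ∑ i, ‖b.repr ψ i‖ ^ 2 = 1 := by
      rw [← hnormsq, hψ, one_pow]
    have hsplit : (∑ i ∈ S, ‖b.repr ψ i‖ ^ 2)
        + ∑ i ∈ Finset.univ.filter (fun i => ¬ |μ i - Es| ≤ t), ‖b.repr ψ i‖ ^ 2 = 1 := by
      rw [hS, Finset.sum_filter_add_sum_filter_not, hsum1]
    have hbad : ∑ i ∈ Finset.univ.filter (fun i => ¬ |μ i - Es| ≤ t),
        ‖b.repr ψ i‖ ^ 2 < 1 / 2 := by
      set T := Finset.univ.filter (fun i => ¬ |μ i - Es| ≤ t) with hT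
      have hTsub : ∑ i ∈ T, (μ i - Es) ^ 2 * ‖b.repr ψ i‖ ^ 2 ≤ δ ^ 2 := by
        calc ∑ i ∈ T, (μ i - Es) ^ 2 * ‖b.repr ψ i‖ ^ 2
            ≤ ∑ i, (μ i - Es) ^ 2 * ‖b.repr ψ i‖ ^ 2 :=
              Finset.sum_le_sum_of_subset_of_nonneg (Finset.subset_univ T)
                (fun i _ _ => by positivity)
          _ = ‖H ψ - (Es : ℂ) • ψ‖ ^ 2 := (hkey ψ).symm
          _ ≤ δ ^ 2 := by
              have := norm_nonneg (H ψ - (Es : ℂ) • ψ)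
              nlinarith
      by_cases hall : ∀ i ∈ T, b.repr ψ i = 0
      · have : ∑ i ∈ T, ‖b.repr ψ i‖ ^ 2 = 0 :=
          Finset.sum_eq_zero fun i hi => by rw [hall i hi]; simp
        rw [this]; norm_num
      · push_neg at hall
        obtain ⟨i₀, hi₀T, hi₀⟩ := hall
        have hstrict : ∑ i ∈ T, t ^ 2 * ‖b.repr ψ i‖ ^ 2
            < ∑ i ∈ T, (μ i - Es) ^ 2 * ‖b.repr ψ i‖ ^ 2 := by
          refine Finset.sum_lt_sum (fun i hi => ?_) ⟨i₀, hi₀T, ?_⟩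
          · have h1 : t < |μ i - Es| := lt_of_not_ge (Finset.mem_filter.mp hi).2
            have h2 : t ^ 2 ≤ (μ i - Es) ^ 2 := by
              nlinarith [abs_nonneg (μ i - Es), sq_abs (μ i - Es)]
            nlinarith [sq_nonneg ‖b.repr ψ i‖]
          · have h1 : t < |μ i₀ - Es| := lt_of_not_ge (Finset.mem_filter.mp hi₀T).2
            have h2 : t ^ 2 < (μ i₀ - Es) ^ 2 := by
              nlinarith [abs_nonneg (μ i₀ - Es), sq_abs (μ i₀ - Es)]
            have h3 : 0 < ‖b.repr ψ i₀‖ ^ 2 := pow_pos (norm_pos_iff.mpr hi₀) 2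
            nlinarith
        have h4 : t ^ 2 * ∑ i ∈ T, ‖b.repr ψ i‖ ^ 2 < δ ^ 2 := by
          rw [Finset.mul_sum]; exact lt_of_lt_of_le hstrict hTsub
        have hsn : 0 ≤ ∑ i ∈ T, ‖b.repr ψ i‖ ^ 2 :=
          Finset.sum_nonneg fun i _ => by positivity
        by_contra hge
        push_neg at hge
        have hstep : δ ^ 2 ≤ t ^ 2 * ∑ i ∈ T, ‖b.repr ψ i‖ ^ 2 := by
          nlinarith [mul_le_mul_of_nonneg_right h2t hsn, sq_nonneg δ]
        linarith
    linarith
  constructor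
  · -- part (i)
    intro ψ hψ hle
    have hex : ∃ i, |μ i - Es| ≤ δ := by
      by_contra hc
      push_neg at hc
      have hsum1 : ∑ i, ‖b.repr ψ i‖ ^ 2 = 1 := by rw [← hnormsq, hψ, one_pow]
      have hex0 : ∃ i, b.repr ψ i ≠ 0 := by
        by_contra h0
        push_neg at h0
        have : ∑ i, ‖b.repr ψ i‖ ^ 2 = 0 :=
          Finset.sum_eq_zero fun i _ => by rw [h0 i]; simp
        rw [this] at hsum1; norm_num at hsum1
      obtain ⟨i₀, hi₀⟩ := hex0
      have hstrict : ∑ i, δ ^ 2 * ‖b.repr ψ i‖ ^ 2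
          < ∑ i, (μ i - Es) ^ 2 * ‖b.repr ψ i‖ ^ 2 := by
        refine Finset.sum_lt_sum (fun i _ => ?_) ⟨i₀, Finset.mem_univ i₀, ?_⟩
        · have := hc i
          have h2 : δ ^ 2 ≤ (μ i - Es) ^ 2 := by
            nlinarith [abs_nonneg (μ i - Es), sq_abs (μ i - Es)]
          nlinarith [sq_nonneg ‖b.repr ψ i‖]
        · have := hc i₀
          have h2 : δ ^ 2 < (μ i₀ - Es) ^ 2 := by
            nlinarith [abs_nonneg (μ i₀ - Es), sq_abs (μ i₀ - Es)]
          have h3 : 0 < ‖b.repr ψ i₀‖ ^ 2 := pow_pos (norm_pos_iff.mpr hi₀) 2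
          nlinarith
      have h4 : ∑ i, δ ^ 2 * ‖b.repr ψ i‖ ^ 2 = δ ^ 2 := by
        rw [← Finset.mul_sum, hsum1, mul_one]
      have h5 : ‖H ψ - (Es : ℂ) • ψ‖ ^ 2 ≤ δ ^ 2 := by
        have := norm_nonneg (H ψ - (Es : ℂ) • ψ)
        nlinarith
      rw [hkey ψ] at h5
      linarith
    obtain ⟨i, hi⟩ := hex
    exact ⟨μ i, b i, b.orthonormal.1 i, hH.apply_eigenvectorBasis hn i, hi⟩
  · -- part (ii)
    intro ψ₁ ψ₂ hO hle₁ hle₂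
    have hψ₁ : ‖ψ₁‖ = 1 := by simpa using hO.1 0
    have hψ₂ : ‖ψ₂‖ = 1 := by simpa using hO.1 1
    set S := Finset.univ.filter (fun i => |μ i - Es| ≤ Real.sqrt 2 * δ) with hS
    have h2t : 2 * δ ^ 2 ≤ (Real.sqrt 2 * δ) ^ 2 := by
      have h2 : Real.sqrt 2 ^ 2 = 2 := Real.sq_sqrt (by norm_num)
      nlinarith
    by_cases hcard : 2 ≤ S.card
    · obtain ⟨j, hj, k, hk, hjk⟩ := Finset.one_lt_card.mp (show 1 < S.card by omega)
      have hj' : |μ j - Es| ≤ Real.sqrt 2 * δ := (Finset.mem_filter.mp hj).2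
      have hk' : |μ k - Es| ≤ Real.sqrt 2 * δ := (Finset.mem_filter.mp hk).2
      have hinj : Function.Injective ![j, k] := by
        intro a c
        fin_cases a <;> fin_cases c <;> simp [hjk, hjk.symm]
      have hcompeq : ![b j, b k] = b ∘ ![j, k] := by
        funext a; fin_cases a <;> rfl
      refine ⟨μ j, μ k, b j, b k, ?_, hH.apply_eigenvectorBasis hn j,
        hH.apply_eigenvectorBasis hn k, hj', hk'⟩
      rw [hcompeq]
      exact b.orthonormal.comp ![j, k] hinj
    · exfalso
      have h1 := main (Real.sqrt 2 * δ) (by positivity) h2t ψ₁ hψ₁ hle₁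
      have h2 := main (Real.sqrt 2 * δ) (by positivity) h2t ψ₂ hψ₂ hle₂
      rw [← hS] at h1 h2
      have hSne : S.Nonempty := by
        rcases S.eq_empty_or_nonempty with h | h
        · rw [h] at h1; simp at h1; linarith
        · exact h
      have hcard1 : S.card = 1 := by
        have := Finset.Nonempty.card_pos hSne
        omega
      obtain ⟨j, hjS⟩ := Finset.card_eq_one.mp hcard1
      rw [hjS, Finset.sum_singleton] at h1 h2
      have hbessel := hO.sum_inner_products_le (b j) (s := Finset.univ)
      have hbj : ‖b j‖ = 1 := b.orthonormal.1 j
      rw [Fin.sum_univ_two] at hbessel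
      simp only [Matrix.cons_val_zero, Matrix.cons_val_one, Matrix.head_cons, hbj,
        one_pow] at hbessel
      have e1 : ‖b.repr ψ₁ j‖ = ‖⟪ψ₁, (b j : V)⟫_ℂ‖ := by
        rw [b.repr_apply_apply, norm_inner_symm]
      have e2 : ‖b.repr ψ₂ j‖ = ‖⟪ψ₂, (b j : V)⟫_ℂ‖ := by
        rw [b.repr_apply_apply, norm_inner_symm]
      rw [e1] at h1; rw [e2] at h2
      linarith
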